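/- Let a > 0 and suppose g₁, g₃ : [0, ∞) → ℝ are positive differentiable functions satisfying g₁' = (a² + g₃²)/(g₁g₃) and g₃' = (a² - g₃²)/g₁² with g₁(0) = g₃(0) = 1. Then for all t ≥ 0: if a < 1 then g₃ is strictly decreasing while g₃(t) > a, and if a > 1 then g₃ is strictly increasing while g₃(t) < a; in particular min(1,a) ≤ g₃(t) ≤ max(1,a) for all t ≥ 0. -/

import Mathlib

/-- Qualitative behavior of the generalized Ricci flow system on the Heisenberg group:
along positive solutions of `g₁' = (a² + g₃²)/(g₁g₃)`, `g₃' = (a² - g₃²)/g₁²` with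
`g₁(0) = g₃(0) = 1`, if `a < 1` then `g₃` is strictly decreasing and stays above `a`,
if `a > 1` then `g₃` is strictly increasing and stays below `a`, and in any case
`min 1 a ≤ g₃ ≤ max 1 a`. -/
theorem stmt5 (a : ℝ) (ha : 0 < a) (g₁ g₃ : ℝ → ℝ)
    (hpos1 : ∀ t ≥ (0:ℝ), 0 < g₁ t) (hpos3 : ∀ t ≥ (0:ℝ), 0 < g₃ t)
    (h1 : ∀ t ≥ (0:ℝ), HasDerivAt g₁ ((a ^ 2 + g₃ t ^ 2) / (g₁ t * g₃ t)) t)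
    (h3 : ∀ t ≥ (0:ℝ), HasDerivAt g₃ ((a ^ 2 - g₃ t ^ 2) / g₁ t ^ 2) t)
    (h10 : g₁ 0 = 1) (h30 : g₃ 0 = 1) :
    (a < 1 → StrictAntiOn g₃ (Set.Ici (0:ℝ)) ∧ ∀ t ≥ (0:ℝ), a < g₃ t) ∧
    (1 < a → StrictMonoOn g₃ (Set.Ici (0:ℝ)) ∧ ∀ t ≥ (0:ℝ), g₃ t < a) ∧
    (∀ t ≥ (0:ℝ), min 1 a ≤ g₃ t ∧ g₃ t ≤ max 1 a) := by
  -- continuity facts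
  have hc3 : ∀ t ≥ (0:ℝ), ContinuousAt g₃ t := fun t ht => (h3 t ht).continuousAt
  have hc1 : ∀ t ≥ (0:ℝ), ContinuousAt g₁ t := fun t ht => (h1 t ht).continuousAt
  have hc3On : ∀ T : ℝ, ContinuousOn g₃ (Set.Icc 0 T) := fun T t ht =>
    (hc3 t ht.1).continuousWithinAt
  have hc3Ici : ContinuousOn g₃ (Set.Ici 0) := fun t ht => (hc3 t ht).continuousWithinAt
  -- key nonvanishing lemma : if a ≠ 1 then g₃ never equals a
  have hne : a ≠ 1 → ∀ t ≥ (0:ℝ), g₃ t ≠ a := by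
    intro hane T hT hgT
    -- bound for (g₃+a)/g₁² on [0,T]
    have hk : ContinuousOn (fun s => (g₃ s + a) / g₁ s ^ 2) (Set.Icc 0 T) := by
      apply ContinuousOn.div
      · exact (hc3On T).add continuousOn_const
      · exact (fun t ht => ((hc1 t ht.1).continuousWithinAt).pow 2)
      · intro t ht
        exact pow_ne_zero 2 (ne_of_gt (hpos1 t ht.1))
    obtain ⟨x, hx, hmax⟩ := isCompact_Icc.exists_isMaxOn ⟨0, Set.left_mem_Icc.2 hT⟩ hk
    set C := (g₃ x + a) / g₁ x ^ 2 with hC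
    have hCb : ∀ s ∈ Set.Icc (0:ℝ) T, (g₃ s + a) / g₁ s ^ 2 ≤ C := fun s hs => hmax hs
    set φ := fun s => (g₃ s - a) ^ 2 * Real.exp (2 * C * s) with hφ
    have hφd : ∀ s ∈ Set.Icc (0:ℝ) T, HasDerivAt φ
        ((2 * (g₃ s - a) * ((a ^ 2 - g₃ s ^ 2) / g₁ s ^ 2)) * Real.exp (2 * C * s)
          + (g₃ s - a) ^ 2 * (2 * C * Real.exp (2 * C * s))) s := by
      intro s hs
      have hd3 := (h3 s hs.1).sub_const a
      have hd : HasDerivAt (fun u => (g₃ u - a) ^ 2)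
          (2 * (g₃ s - a) * ((a ^ 2 - g₃ s ^ 2) / g₁ s ^ 2)) s := by
        have := hd3.fun_pow 2
        simpa [mul_comm, mul_assoc, mul_left_comm] using this
      have he : HasDerivAt (fun u => Real.exp (2 * C * u)) (2 * C * Real.exp (2 * C * s)) s := by
        have := ((hasDerivAt_id s).const_mul (2 * C)).exp
        convert this using 1
        simp [mul_comm]
        show 2 * C * Real.exp (2 * C * s) = Real.exp (2 * C * s) * (2 * C * 1); ring
      simpa using hd.fun_mul he
    have hmono : MonotoneOn φ (Set.Icc 0 T) := by
      apply monotoneOn_of_hasDerivWithinAt_nonneg (convex_Icc 0 T)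
        (f' := fun s => (2 * (g₃ s - a) * ((a ^ 2 - g₃ s ^ 2) / g₁ s ^ 2)) * Real.exp (2 * C * s)
          + (g₃ s - a) ^ 2 * (2 * C * Real.exp (2 * C * s)))
      · exact fun s hs => ((hφd s hs).continuousAt).continuousWithinAt
      · intro s hs
        exact ((hφd s (interior_subset hs)).hasDerivWithinAt)
      · intro s hs
        have hs' : s ∈ Set.Icc (0:ℝ) T := interior_subset hs
        have h1p : 0 < g₁ s ^ 2 := pow_pos (hpos1 s hs'.1) 2
        have hkb : (g₃ s + a) / g₁ s ^ 2 ≤ C := hCb s hs'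
        have hep : 0 < Real.exp (2 * C * s) := Real.exp_pos _
        have key : (2 * (g₃ s - a) * ((a ^ 2 - g₃ s ^ 2) / g₁ s ^ 2))
            + (g₃ s - a) ^ 2 * (2 * C)
            = 2 * (g₃ s - a) ^ 2 * (C - (g₃ s + a) / g₁ s ^ 2) := by
          field_simp
          ring
        have hnn : 0 ≤ (2 * (g₃ s - a) * ((a ^ 2 - g₃ s ^ 2) / g₁ s ^ 2))
            + (g₃ s - a) ^ 2 * (2 * C) := by
          rw [key]
          have : 0 ≤ C - (g₃ s + a) / g₁ s ^ 2 := sub_nonneg.2 hkb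
          positivity
        nlinarith [mul_nonneg hnn hep.le]
    have h0T : φ 0 ≤ φ T :=
      hmono (Set.left_mem_Icc.2 hT) (Set.right_mem_Icc.2 hT) hT
    have hφ0 : φ 0 = (1 - a) ^ 2 := by simp [hφ, h30]
    have hφT : φ T = 0 := by simp [hφ, hgT]
    have : (1 - a) ^ 2 > 0 := by
      have : (1:ℝ) - a ≠ 0 := fun h => hane (by linarith : a = 1)
      positivity
    rw [hφ0, hφT] at h0T
    linarith
  -- case a = 1 : g₃ ≡ 1
  have heq1 : a = 1 → ∀ t ≥ (0:ℝ), g₃ t = 1 := by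
    intro hae T hT
    set F := fun s => (g₃ s - a) ^ 2 with hF
    have hFd : ∀ s ∈ Set.Icc (0:ℝ) T, HasDerivAt F
        (2 * (g₃ s - a) * ((a ^ 2 - g₃ s ^ 2) / g₁ s ^ 2)) s := by
      intro s hs
      have := ((h3 s hs.1).sub_const a).fun_pow 2
      simpa [mul_comm, mul_assoc, mul_left_comm] using this
    have hanti : AntitoneOn F (Set.Icc 0 T) := by
      apply antitoneOn_of_hasDerivWithinAt_nonpos (convex_Icc 0 T)
        (f' := fun s => 2 * (g₃ s - a) * ((a ^ 2 - g₃ s ^ 2) / g₁ s ^ 2))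
      · exact fun s hs => ((hFd s hs).continuousAt).continuousWithinAt
      · intro s hs; exact (hFd s (interior_subset hs)).hasDerivWithinAt
      · intro s hs
        have hs' : s ∈ Set.Icc (0:ℝ) T := interior_subset hs
        have h1p : 0 < g₁ s ^ 2 := pow_pos (hpos1 s hs'.1) 2
        have h3p : 0 < g₃ s := hpos3 s hs'.1
        have key : 2 * (g₃ s - a) * ((a ^ 2 - g₃ s ^ 2) / g₁ s ^ 2)
            = -(2 * (g₃ s - a) ^ 2 * ((g₃ s + a) / g₁ s ^ 2)) := by
          field_simp; ring
        rw [key, neg_nonpos]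
        positivity
    have h0T : F T ≤ F 0 := hanti (Set.left_mem_Icc.2 hT) (Set.right_mem_Icc.2 hT) hT
    have hF0 : F 0 = 0 := by simp [hF, h30, hae]
    have hFT : 0 ≤ F T := sq_nonneg _
    have : F T = 0 := le_antisymm (hF0 ▸ h0T) hFT
    have : g₃ T - a = 0 := by
      have := pow_eq_zero_iff (n := 2) (by norm_num) |>.1 this
      exact this
    linarith [hae ▸ this]
  -- sign lemmas via IVT
  have hgt : a < 1 → ∀ t ≥ (0:ℝ), a < g₃ t := by
    intro ha1 t ht
    rcases lt_or_ge a (g₃ t) with h | h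
    · exact h
    have hne' := hne (ne_of_lt ha1) t ht
    have hlt : g₃ t < a := lt_of_le_of_ne h (Ne.symm (Ne.symm hne'))
    -- IVT on [0, t] : g₃ 0 = 1 > a > g₃ t
    have : a ∈ Set.Icc (g₃ t) (g₃ 0) := ⟨hlt.le, by rw [h30]; exact ha1.le⟩
    obtain ⟨s, hs, hgs⟩ := intermediate_value_Icc' ht (hc3On t) this
    exact (hne (ne_of_lt ha1) s hs.1 hgs).elim
  have hlt : 1 < a → ∀ t ≥ (0:ℝ), g₃ t < a := by
    intro ha1 t ht
    rcases lt_or_ge (g₃ t) a with h | h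
    · exact h
    have hne' := hne (ne_of_gt ha1) t ht
    have hgt' : a < g₃ t := lt_of_le_of_ne h (Ne.symm hne')
    have : a ∈ Set.Icc (g₃ 0) (g₃ t) := ⟨by rw [h30]; exact ha1.le, hgt'.le⟩
    obtain ⟨s, hs, hgs⟩ := intermediate_value_Icc ht (hc3On t) this
    exact (hne (ne_of_gt ha1) s hs.1 hgs).elim
  -- monotonicity
  have hAnti : a < 1 → StrictAntiOn g₃ (Set.Ici 0) := by
    intro ha1
    apply strictAntiOn_of_hasDerivWithinAt_neg (convex_Ici 0) hc3Ici
      (f' := fun s => (a ^ 2 - g₃ s ^ 2) / g₁ s ^ 2)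
    · intro s hs
      rw [interior_Ici] at hs
      exact (h3 s (le_of_lt hs)).hasDerivWithinAt
    · intro s hs
      rw [interior_Ici] at hs
      have hs' : (0:ℝ) ≤ s := le_of_lt hs
      have hga : a < g₃ s := hgt ha1 s hs'
      have h1p : 0 < g₁ s ^ 2 := pow_pos (hpos1 s hs') 2
      apply div_neg_of_neg_of_pos _ h1p
      nlinarith
  have hMono : 1 < a → StrictMonoOn g₃ (Set.Ici 0) := by
    intro ha1
    apply strictMonoOn_of_hasDerivWithinAt_pos (convex_Ici 0) hc3Ici
      (f' := fun s => (a ^ 2 - g₃ s ^ 2) / g₁ s ^ 2)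
    · intro s hs
      rw [interior_Ici] at hs
      exact (h3 s (le_of_lt hs)).hasDerivWithinAt
    · intro s hs
      rw [interior_Ici] at hs
      have hs' : (0:ℝ) ≤ s := le_of_lt hs
      have hga : g₃ s < a := hlt ha1 s hs'
      have h3p : 0 < g₃ s := hpos3 s hs'
      have h1p : 0 < g₁ s ^ 2 := pow_pos (hpos1 s hs') 2
      apply div_pos _ h1p
      nlinarith
  refine ⟨fun ha1 => ⟨hAnti ha1, hgt ha1⟩, fun ha1 => ⟨hMono ha1, hlt ha1⟩, ?_⟩
  intro t ht
  rcases lt_trichotomy a 1 with ha1 | ha1 | ha1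
  · have hmin : min 1 a = a := min_eq_right ha1.le
    have hmax : max 1 a = 1 := max_eq_left ha1.le
    constructor
    · rw [hmin]; exact (hgt ha1 t ht).le
    · rw [hmax]
      rcases eq_or_lt_of_le ht with h | h
      · rw [← h, h30]
      · have := hAnti ha1 (Set.self_mem_Ici) (Set.mem_Ici.2 ht) h
        rw [h30] at this; exact this.le
  · have := heq1 ha1 t ht
    rw [this, ← ha1]
    simp [min_self, max_self, ha1]
  · have hmin : min 1 a = 1 := min_eq_left ha1.le
    have hmax : max 1 a = a := max_eq_right ha1.le
    constructor
    · rw [hmin]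
      rcases eq_or_lt_of_le ht with h | h
      · rw [← h, h30]
      · have := hMono ha1 (Set.self_mem_Ici) (Set.mem_Ici.2 ht) h
        rw [h30] at this; exact this.le
    · rw [hmax]; exact (hlt ha1 t ht).le
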